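/- Let τ ≥ 2 and let Φ be the clock with parameter τ, i.e. the conjunctive network with firing memory on the complete graph K_{τ+1} with maximum delay dt_i = τ at every node. Let y be the configuration whose node i (for i = 0,1,…,τ) is, in delay notation, in state i (that is, node 0 is in the pair state (0,0) and node i ≥ 1 is in the pair state (1,i)). Then for every t ≥ 0 and every node i, the state of node i in Φ^t(y) is, in delay notation, (i − t) mod (τ+1). -/
import Mathlib


open Classical in
/-- The conjunctive network on a finite simple graph `G`:
`F(x)_i = ⋀_{j adjacent to i} x_j`. -/
noncomputable def conjNet {V : Type*} [Fintype V] (G : SimpleGraph V)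
    (x : V → Bool) : V → Bool :=
  fun i => if ∀ j, G.Adj i j → x j = true then true else false

/-- One step of the conjunctive network with firing memory on `G` with
maximum delays `dt`.  A configuration assigns to each node a pair
`(xᵢ, Δᵢ)` of a Boolean state and a delay. -/
noncomputable def fmStep {V : Type*} [Fintype V] (G : SimpleGraph V) (dt : V → ℕ)
    (y : V → Bool × ℕ) : V → Bool × ℕ :=
  fun i =>
    let f := conjNet G (fun j => (y j).1) i
    let d : ℕ := if f = true then dt i else (y i).2 - 1
    (if 1 ≤ d then true else f, d)

lemma clock_step (τ : ℕ) (hτ : 2 ≤ τ) (t : ℕ)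
    (y : Fin (τ+1) → Bool × ℕ)
    (hy : ∀ j : Fin (τ+1), y j =
      (if (((j:ℕ) : ZMod (τ+1)) - (t : ℕ)).val = 0 then ((false,0) : Bool × ℕ)
       else (true, (((j:ℕ) : ZMod (τ+1)) - (t : ℕ)).val))) (i : Fin (τ+1)) :
    fmStep (⊤ : SimpleGraph (Fin (τ+1))) (fun _ => τ) y i =
      (if (((i:ℕ) : ZMod (τ+1)) - ((t+1 : ℕ) : ZMod (τ+1))).val = 0 then ((false,0) : Bool × ℕ)
       else (true, (((i:ℕ) : ZMod (τ+1)) - ((t+1:ℕ) : ZMod (τ+1))).val)) := by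
  set a : ZMod (τ+1) := ((i:ℕ) : ZMod (τ+1)) - (t : ℕ) with ha
  have hsub : ((i:ℕ) : ZMod (τ+1)) - ((t+1 : ℕ) : ZMod (τ+1)) = a - 1 := by
    push_cast; ring
  have hinj : ∀ j k : Fin (τ+1), ((j:ℕ) : ZMod (τ+1)) = ((k:ℕ) : ZMod (τ+1)) → j = k := by
    intro j k h
    have := congrArg ZMod.val h
    rw [ZMod.val_cast_of_lt j.isLt, ZMod.val_cast_of_lt k.isLt] at this
    exact Fin.ext this
  by_cases h0 : a.val = 0
  · -- i ≡ t : node fires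
    have ha0 : a = 0 := (ZMod.val_eq_zero a).mp h0
    have hf : conjNet (⊤ : SimpleGraph (Fin (τ+1))) (fun j => (y j).1) i = true := by
      unfold conjNet
      rw [if_pos]
      intro j hj
      show (y j).1 = true
      rw [hy j]
      have hne : (((j:ℕ):ZMod (τ+1)) - (t:ℕ)).val ≠ 0 := by
        intro hz
        have hz' : ((j:ℕ):ZMod (τ+1)) - (t:ℕ) = 0 := (ZMod.val_eq_zero _).mp hz
        have : ((j:ℕ):ZMod (τ+1)) = ((i:ℕ):ZMod (τ+1)) := by
          have h1 : ((j:ℕ):ZMod (τ+1)) = (t:ℕ) := by linear_combination hz'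
          have h2 : ((i:ℕ):ZMod (τ+1)) = (t:ℕ) := by linear_combination ha0
          rw [h1, h2]
        exact ((SimpleGraph.top_adj i j).mp hj) (hinj i j this.symm)
      simp [hne]
    simp only [fmStep, hf, if_true]
    have hτ1 : 1 ≤ τ := by omega
    rw [if_pos hτ1, hsub, ha0, zero_sub]
    have hv : (-1 : ZMod (τ+1)).val = τ := ZMod.val_neg_one τ
    rw [hv, if_neg (by omega)]
  · -- node does not fire
    have hv1 : 1 ≤ a.val := Nat.one_le_iff_ne_zero.mpr h0
    set j₀ : Fin (τ+1) := ⟨((t:ℕ) : ZMod (τ+1)).val, ZMod.val_lt _⟩ with hj₀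
    have hj₀c : ((j₀:ℕ) : ZMod (τ+1)) = ((t:ℕ) : ZMod (τ+1)) := by
      show ((((t:ℕ) : ZMod (τ+1)).val : ℕ) : ZMod (τ+1)) = _
      exact ZMod.natCast_zmod_val _
    have hj₀ne : i ≠ j₀ := by
      intro h
      apply h0
      rw [ha, h, hj₀c, sub_self, ZMod.val_zero]
    have hf : conjNet (⊤ : SimpleGraph (Fin (τ+1))) (fun j => (y j).1) i = false := by
      unfold conjNet
      rw [if_neg]
      push_neg
      refine ⟨j₀, (SimpleGraph.top_adj i j₀).mpr hj₀ne, ?_⟩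
      show ¬ ((y j₀).1 = true)
      rw [hy j₀]
      rw [if_pos (by rw [hj₀c, sub_self, ZMod.val_zero])]
      simp
    have hyi : (y i).2 = a.val := by rw [hy i, if_neg h0]
    have hval : (a - 1).val = a.val - 1 := by
      have h1 : a - 1 = ((a.val - 1 : ℕ) : ZMod (τ+1)) := by
        rw [Nat.cast_sub hv1, ZMod.natCast_zmod_val, Nat.cast_one]
      rw [h1, ZMod.val_cast_of_lt (by have := a.val_lt; omega)]
    simp only [fmStep, hf, Bool.false_eq_true, if_false, hyi, hsub, hval]
    by_cases hb : a.val - 1 = 0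
    · rw [if_neg (show ¬ 1 ≤ a.val - 1 by omega), if_pos hb, hb]
    · rw [if_pos (show 1 ≤ a.val - 1 by omega), if_neg hb]


/-- on the clock with parameter `τ` (complete graph `K_{τ+1}`,
maximum delay `τ` everywhere), starting from the configuration whose node `i`
is in delay-notation state `i`, after `t` steps node `i` is in delay-notation
state `(i - t) mod (τ + 1)`. -/
theorem clock_orbit (τ : ℕ) (hτ : 2 ≤ τ) (t : ℕ) (i : Fin (τ + 1)) :
    (fmStep (⊤ : SimpleGraph (Fin (τ + 1))) (fun _ => τ))^[t]
      (fun j : Fin (τ + 1) =>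
        if (j : ℕ) = 0 then ((false, 0) : Bool × ℕ) else (true, (j : ℕ))) i =
    (if (((i : ℕ) : ZMod (τ + 1)) - ((t : ℕ) : ZMod (τ + 1))).val = 0
      then ((false, 0) : Bool × ℕ)
      else (true, (((i : ℕ) : ZMod (τ + 1)) - ((t : ℕ) : ZMod (τ + 1))).val)) := by
  induction t generalizing i with
  | zero =>
    simp only [Function.iterate_zero, id_eq, Nat.cast_zero, sub_zero,
      ZMod.val_cast_of_lt i.isLt]
  | succ t ih =>
    rw [Function.iterate_succ_apply']
    exact clock_step τ hτ t _ (fun j => ih j) i
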